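/- Let T be a descent modulus for a translation cone F of continuous coercive functions on a nonempty topological space X, and let f, g ∈ dom(T) and c ∈ ℝ be such that (i) T[f](x) = T[g](x) for all x ∈ X, and (ii) f(x) = g(x) + c for all x in the T-critical set Z_T(f). Then f(x) = g(x) + c for all x ∈ X. -/

import Mathlib

lemma descent_le_aux
    {X : Type*} [TopologicalSpace X]
    (F : Set (X → ℝ)) (T : (X → ℝ) → X → ENNReal)
    (hF_cont : ∀ f ∈ F, Continuous f)
    (hF_coercive : ∀ f ∈ F, ∀ α : ℝ, (∃ x, α < f x) → IsCompact {x | f x ≤ α})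
    (hF_cone : ∀ f ∈ F, ∀ r : ℝ, 0 ≤ r → (fun x => r * f x) ∈ F)
    (hF_trans : ∀ f ∈ F, ∀ c : ℝ, (fun x => f x + c) ∈ F)
    (hD1 : ∀ f ∈ F, ∀ x : X, (∀ z, f x ≤ f z) → T f x = 0)
    (hD2 : ∀ f ∈ F, ∀ g ∈ F, ∀ x : X,
      (∀ z, max (g x - g z) 0 ≤ max (f x - f z) 0) → T g x ≤ T f x)
    (hD3 : ∀ f ∈ F, ∀ x : X, ∀ r : ℝ, 1 < r → 0 < T f x → T f x < ⊤ →
      T f x < T (fun y => r * f y) x)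
    (f g : X → ℝ) (hf : f ∈ F) (hg : g ∈ F)
    (hf_dom : ∀ x, T f x ≠ ⊤) (hg_dom : ∀ x, T g x ≠ ⊤)
    (c : ℝ)
    (h_eq : ∀ x, T f x = T g x)
    (h_crit : ∀ x, T f x = 0 → f x = g x + c) :
    ∀ x, f x ≤ g x + c := by
  -- the D3 contradiction loop
  have loop : ∀ (r e : ℝ), 1 < r → ∀ x : X,
      T (fun y => r * g y + e) x ≤ T f x → T g x ≠ 0 → False := by
    intro r e hr x hTle hne
    have hr0 : (0:ℝ) < r := by linarith
    have hg' : (fun y => g y + e / r) ∈ F := hF_trans g hg (e / r)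
    have hTg' : T (fun y => g y + e / r) x = T g x := by
      apply le_antisymm
      · apply hD2 g hg _ hg' x
        intro z
        have : g x + e / r - (g z + e / r) = g x - g z := by ring
        rw [this]
      · apply hD2 _ hg' g hg x
        intro z
        have : g x + e / r - (g z + e / r) = g x - g z := by ring
        rw [this]
    have hpos : 0 < T (fun y => g y + e / r) x := by
      rw [hTg']; exact pos_iff_ne_zero.mpr hne
    have hfin : T (fun y => g y + e / r) x < ⊤ := by
      rw [hTg']; exact lt_top_iff_ne_top.mpr (hg_dom x)
    have h3 := hD3 _ hg' x r hr hpos hfin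
    have hfun : (fun y => r * ((fun y => g y + e / r) y)) = (fun y => r * g y + e) := by
      funext y
      field_simp
    rw [hfun, hTg'] at h3
    have : T g x < T g x := by
      calc T g x < T (fun y => r * g y + e) x := h3
        _ ≤ T f x := hTle
        _ = T g x := h_eq x
    exact lt_irrefl _ this
  -- points strictly below the supremum of g
  have lemA : ∀ x w : X, g x < g w → f x ≤ g x + c := by
    intro x w hxw
    have hK : IsCompact {y | g y ≤ g x} := hF_coercive g hg (g x) ⟨w, hxw⟩
    obtain ⟨xm, hxm_mem, hxm'⟩ :=
      hK.exists_isMinOn ⟨x, le_refl (g x)⟩ (hF_cont g hg).continuousOn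
    rw [isMinOn_iff] at hxm'
    have hxm : ∀ z ∈ {y | g y ≤ g x}, g xm ≤ g z := hxm'
    have hmin : ∀ z, g xm ≤ g z := by
      intro z
      by_cases hz : g z ≤ g x
      · exact hxm z hz
      · exact le_trans (hxm x (le_refl (g x))) (by linarith)
    have key : ∀ r : ℝ, 1 < r → f x ≤ r * g x + (g xm + c - r * g xm) := by
      intro r hr
      set e := g xm + c - r * g xm with he
      have hr0 : (0:ℝ) ≤ r := by linarith
      have hgF : (fun y => r * g y + e) ∈ F := hF_trans _ (hF_cone g hg r hr0) e
      obtain ⟨xs, hxs_mem, hxs'⟩ :=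
        hK.exists_isMaxOn ⟨x, le_refl (g x)⟩
          (((hF_cont f hf).sub (hF_cont _ hgF)).continuousOn)
      rw [isMaxOn_iff] at hxs'
      have hxs : ∀ z ∈ {y | g y ≤ g x}, f z - (r * g z + e) ≤ f xs - (r * g xs + e) := hxs'
      have hxs_le : g xs ≤ g x := hxs_mem
      have hcomp : ∀ z, max ((r * g xs + e) - (r * g z + e)) 0 ≤ max (f xs - f z) 0 := by
        intro z
        by_cases hz : g z ≤ g x
        · have h1 := hxs z hz
          have h2 : (r * g xs + e) - (r * g z + e) ≤ f xs - f z := by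
            linarith
          exact max_le_max h2 (le_refl 0)
        · have h2 : (r * g xs + e) - (r * g z + e) ≤ 0 := by nlinarith
          rw [max_eq_right h2]
          exact le_max_right _ _
      have hTle : T (fun y => r * g y + e) xs ≤ T f xs := hD2 f hf _ hgF xs hcomp
      by_cases hzero : T g xs = 0
      · have hfz : T f xs = 0 := by rw [h_eq]; exact hzero
        have hceq := h_crit xs hfz
        have hφs : f xs - (r * g xs + e) ≤ 0 := by nlinarith [hmin xs]
        have hφx := hxs x (le_refl (g x))
        linarith
      · exact absurd (loop r e hr xs hTle hzero) (fun h => h)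
    by_cases hxm2 : g x ≤ g xm
    · have h2 := key 2 one_lt_two
      have := hmin x
      linarith
    · push_neg at hxm2
      by_contra hgt
      push_neg at hgt
      have hden : (0:ℝ) < g x - g xm := by linarith
      obtain ⟨r, hr, h1⟩ : ∃ r : ℝ, 1 < r ∧
          r * g x - r * g xm = g x - g xm + (f x - g x - c) / 2 := by
        refine ⟨1 + (f x - g x - c) / (2 * (g x - g xm)), ?_, ?_⟩
        · have hdiv : 0 < (f x - g x - c) / (2 * (g x - g xm)) :=
            div_pos (by linarith) (by linarith)
          linarith
        · field_simp
      have := key r hr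
      linarith
  intro x
  by_cases hmax : ∀ z, g z ≤ g x
  · by_cases hconst : ∀ z, g x ≤ g z
    · have h0 : T g x = 0 := hD1 g hg x hconst
      have hfz : T f x = 0 := by rw [h_eq]; exact h0
      exact le_of_eq (h_crit x hfz)
    · push_neg at hconst
      obtain ⟨z0, hz0⟩ := hconst
      by_contra hgt
      push_neg at hgt
      -- global minimum of g
      have hK0 : IsCompact {y | g y ≤ g z0} := hF_coercive g hg (g z0) ⟨x, hz0⟩
      obtain ⟨xm, hxm_mem, hxm'⟩ :=
        hK0.exists_isMinOn ⟨z0, le_refl (g z0)⟩ (hF_cont g hg).continuousOn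
      rw [isMinOn_iff] at hxm'
      have hxm : ∀ z ∈ {y | g y ≤ g z0}, g xm ≤ g z := hxm'
      have hxm_le : g xm ≤ g z0 := hxm_mem
      have hmin : ∀ z, g xm ≤ g z := by
        intro z
        by_cases hz : g z ≤ g z0
        · exact hxm z hz
        · linarith
      have hmlt : g xm < g x := lt_of_le_of_lt hxm_le hz0
      have hden : (0:ℝ) < g x - g xm := by linarith
      obtain ⟨r, hr, h1⟩ : ∃ r : ℝ, 1 < r ∧
          r * g x - r * g xm = g x - g xm + (f x - g x - c) / 2 := by
        refine ⟨1 + (f x - g x - c) / (2 * (g x - g xm)), ?_, ?_⟩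
        · have hdiv : 0 < (f x - g x - c) / (2 * (g x - g xm)) :=
            div_pos (by linarith) (by linarith)
          linarith
        · field_simp
      have hr0 : (0:ℝ) ≤ r := by linarith
      obtain ⟨e⟩ : Nonempty ℝ := ⟨0⟩
      have hgF : (fun y => r * g y + e) ∈ F := hF_trans _ (hF_cone g hg r hr0) e
      have hcomp : ∀ z, max ((r * g x + e) - (r * g z + e)) 0 ≤ max (f x - f z) 0 := by
        intro z
        by_cases hz : g z < g x
        · have hfz : f z ≤ g z + c := lemA z x hz
          have h2 : r * g xm - g xm ≤ r * g z - g z := by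
            have := mul_le_mul_of_nonneg_left (hmin z) (show (0:ℝ) ≤ r - 1 by linarith)
            nlinarith
          have h3 : (r * g x + e) - (r * g z + e) ≤ f x - f z := by
            have hh : r * g x - r * g z ≤ f x - f z := by linarith
            linarith
          exact max_le_max h3 (le_refl 0)
        · push_neg at hz
          have h2 : (r * g x + e) - (r * g z + e) ≤ 0 := by
            have := mul_le_mul_of_nonneg_left hz hr0
            linarith
          rw [max_eq_right h2]
          exact le_max_right _ _
      have hTle : T (fun y => r * g y + e) x ≤ T f x := hD2 f hf _ hgF x hcomp
      by_cases hzero : T g x = 0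
      · have hfz : T f x = 0 := by rw [h_eq]; exact hzero
        have := h_crit x hfz
        linarith
      · exact loop r e hr x hTle hzero
  · push_neg at hmax
    obtain ⟨w, hw⟩ := hmax
    exact lemA x w hw


/-- **Determination of continuous coercive functions.**
Let `T` be a descent modulus for a translation cone `F` of continuous coercive
functions on a nonempty topological space `X`; if `f, g ∈ dom T` satisfy
`T[f] = T[g]` everywhere and `f = g + c` on the `T`-critical set of `f`, then
`f = g + c` everywhere. -/
theorem determination_of_continuous_coercive_functions
    {X : Type*} [TopologicalSpace X] [Nonempty X]
    (F : Set (X → ℝ)) (T : (X → ℝ) → X → ENNReal)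
    -- F ⊆ K(X): continuous and coercive
    (hF_cont : ∀ f ∈ F, Continuous f)
    (hF_coercive : ∀ f ∈ F, ∀ α : ℝ, (∃ x, α < f x) → IsCompact {x | f x ≤ α})
    -- F is a translation cone
    (hF_cone : ∀ f ∈ F, ∀ r : ℝ, 0 ≤ r → (fun x => r * f x) ∈ F)
    (hF_trans : ∀ f ∈ F, ∀ c : ℝ, (fun x => f x + c) ∈ F)
    -- (D1) T preserves global minima
    (hD1 : ∀ f ∈ F, ∀ x : X, (∀ z, f x ≤ f z) → T f x = 0)
    -- (D2) T is monotone
    (hD2 : ∀ f ∈ F, ∀ g ∈ F, ∀ x : X,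
      (∀ z, max (g x - g z) 0 ≤ max (f x - f z) 0) → T g x ≤ T f x)
    -- (D3) T is scalar-monotone
    (hD3 : ∀ f ∈ F, ∀ x : X, ∀ r : ℝ, 1 < r → 0 < T f x → T f x < ⊤ →
      T f x < T (fun y => r * f y) x)
    (f g : X → ℝ) (hf : f ∈ F) (hg : g ∈ F)
    (hf_dom : ∀ x, T f x ≠ ⊤) (hg_dom : ∀ x, T g x ≠ ⊤)
    (c : ℝ)
    (h_eq : ∀ x, T f x = T g x)
    (h_crit : ∀ x, T f x = 0 → f x = g x + c) :
    ∀ x, f x = g x + c := by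
  have le1 := descent_le_aux F T hF_cont hF_coercive hF_cone hF_trans hD1 hD2 hD3
    f g hf hg hf_dom hg_dom c h_eq h_crit
  have le2 := descent_le_aux F T hF_cont hF_coercive hF_cone hF_trans hD1 hD2 hD3
    g f hg hf hg_dom hf_dom (-c) (fun x => (h_eq x).symm)
    (fun x hx => by
      have hfx : T f x = 0 := by rw [h_eq]; exact hx
      have := h_crit x hfx
      linarith)
  intro x
  have h1 := le1 x
  have h2 := le2 x
  linarith
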